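/- On the universal cover ℝ² of the flat cylinder S¹ × ℝ with strong Kropina metric of navigation data (flat metric, W = (A,B)) with A² + B² = 1, the F-geodesic from p̃ = (p¹,p²) passing through q̃ = (q¹,q²) with ⟨W, q̃−p̃⟩ > 0 reaches q̃ at parameter s₀ = |q̃−p̃|² / (2⟨W, q̃−p̃⟩), and its initial velocity is Ṗ(0) = (2⟨W, q̃−p̃⟩/|q̃−p̃|²) · (q̃−p̃). -/

import Mathlib

/-- On the universal cover `ℝ²` of the flat cylinder with strong Kropina
metric of navigation data (flat metric, constant unit wind `W = (A,B)`), the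
`F`-geodesics from `p̃` are `P(s) = p̃ + s•(a+W)` with `‖a‖ = 1`, `a ≠ -W`.  If such a
geodesic passes through `q̃` (with `⟪W, q̃ - p̃⟫ > 0`) at some parameter `s₀ > 0`, then
`s₀ = ‖q̃-p̃‖²/(2⟪W, q̃-p̃⟫)` and the initial velocity is
`Ṗ(0) = (2⟪W, q̃-p̃⟫/‖q̃-p̃‖²) • (q̃-p̃)`. -/
theorem cylinder_cover_kropina_geodesic
    (W p q : EuclideanSpace ℝ (Fin 2)) (hW : ‖W‖ = 1) (hne : q ≠ p)
    (hpos : 0 < (inner ℝ W (q - p) : ℝ))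
    (a : EuclideanSpace ℝ (Fin 2)) (ha : ‖a‖ = 1) (hna : a ≠ -W)
    (s₀ : ℝ) (hs₀ : 0 < s₀) (hreach : p + s₀ • (a + W) = q) :
    s₀ = ‖q - p‖ ^ 2 / (2 * (inner ℝ W (q - p) : ℝ)) ∧
    deriv (fun s : ℝ => p + s • (a + W)) 0
      = (2 * (inner ℝ W (q - p) : ℝ) / ‖q - p‖ ^ 2) • (q - p) := by
  have hqp : q - p = s₀ • (a + W) := by
    rw [← hreach]; abel
  set c : ℝ := inner ℝ W a with hc
  have hinner : (inner ℝ W (q - p) : ℝ) = s₀ * (c + 1) := by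
    rw [hqp, real_inner_smul_right, inner_add_right, ← hc,
      real_inner_self_eq_norm_sq, hW]
    ring
  have hnorm : ‖q - p‖ ^ 2 = s₀ ^ 2 * (2 * (c + 1)) := by
    have h2 : ‖a + W‖ ^ 2 = 2 * (c + 1) := by
      rw [norm_add_sq_real, ha, hW, real_inner_comm, ← hc]; ring
    rw [hqp, norm_smul, mul_pow, h2, Real.norm_eq_abs, sq_abs]
  have hcpos : 0 < c + 1 := by
    by_contra h
    push_neg at h
    nlinarith [hinner, hpos]
  have hs₀eq : s₀ = ‖q - p‖ ^ 2 / (2 * (inner ℝ W (q - p) : ℝ)) := by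
    rw [hinner, hnorm]
    field_simp
  refine ⟨hs₀eq, ?_⟩
  have hderiv : deriv (fun s : ℝ => p + s • (a + W)) 0 = a + W := by
    have h : HasDerivAt (fun s : ℝ => p + s • (a + W)) (a + W) 0 := by
      simpa using ((hasDerivAt_id (0 : ℝ)).smul_const (a + W)).const_add p
    exact h.deriv
  have hco : (2 * (inner ℝ W (q - p) : ℝ) / ‖q - p‖ ^ 2) = 1 / s₀ := by
    rw [hinner, hnorm]
    field_simp
  rw [hderiv, hco, hqp, smul_smul, one_div, inv_mul_cancel₀ hs₀.ne', one_smul]
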